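/- Let e0, s0, K_M be positive reals and λ = ½(e0+K_M+s0) − ½√((e0+K_M+s0)² − 4e0·s0). Then e0·s0/(e0+K_M+s0) ≤ λ < e0·s0/(e0+K_M); consequently λ/s0 ≤ η/(1+η), where η = e0/K_M. -/

import Mathlib

/-- two-sided bound for λ and the consequence λ/s0 ≤ η/(1+η). -/
theorem lambda_two_sided_bound (e0 s0 KM lam η : ℝ)
    (he0 : 0 < e0) (hs0 : 0 < s0) (hKM : 0 < KM)
    (hlam : lam = (e0 + KM + s0) / 2 - Real.sqrt ((e0 + KM + s0) ^ 2 - 4 * e0 * s0) / 2)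
    (hη : η = e0 / KM) :
    e0 * s0 / (e0 + KM + s0) ≤ lam ∧ lam < e0 * s0 / (e0 + KM) ∧
    lam / s0 ≤ η / (1 + η) := by
  set b := e0 + KM + s0 with hb
  set A := e0 + KM with hA
  have hbpos : 0 < b := by rw [hb, hA]; positivity
  have hApos : 0 < A := by rw [hA]; positivity
  set D := b ^ 2 - 4 * e0 * s0 with hD
  have hDpos : 0 < D := by
    have : D = (e0 + KM - s0) ^ 2 + 4 * KM * s0 := by rw [hD, hb, hA]; ring
    rw [this]; positivity
  clear_value D A b
  -- Lower bound
  have hlow : e0 * s0 / b ≤ lam := by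
    have h1 : Real.sqrt D ≤ b - 2 * e0 * s0 / b := by
      have hle : D ≤ (b - 2 * e0 * s0 / b) ^ 2 := by
        have heq : (b - 2 * e0 * s0 / b) ^ 2 = D + (2 * e0 * s0 / b) ^ 2 := by
          rw [hD]; field_simp; ring
        nlinarith [sq_nonneg (2 * e0 * s0 / b)]
      have hnn : 0 ≤ b - 2 * e0 * s0 / b := by
        rw [sub_nonneg, div_le_iff₀ hbpos, hb, hA]
        nlinarith [sq_nonneg (e0 - s0), sq_nonneg (e0 + s0)]
      calc Real.sqrt D ≤ Real.sqrt ((b - 2 * e0 * s0 / b) ^ 2) := Real.sqrt_le_sqrt hle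
        _ = b - 2 * e0 * s0 / b := Real.sqrt_sq hnn
    have h1' : Real.sqrt D * b ≤ b ^ 2 - 2 * (e0 * s0) := by
      have := mul_le_mul_of_nonneg_right h1 hbpos.le
      have hexp : (b - 2 * e0 * s0 / b) * b = b ^ 2 - 2 * (e0 * s0) := by
        field_simp
      linarith [hexp ▸ this]
    rw [hlam, div_le_iff₀ hbpos]
    have : (b / 2 - Real.sqrt D / 2) * b = b ^ 2 / 2 - Real.sqrt D * b / 2 := by ring
    linarith
  -- Upper bound
  have hup : lam < e0 * s0 / A := by
    have h2 : b - 2 * e0 * s0 / A < Real.sqrt D := by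
      rcases lt_or_ge (b - 2 * e0 * s0 / A) 0 with h | h
      · exact h.trans_le (Real.sqrt_nonneg _)
      · rw [Real.lt_sqrt h]
        have key : A ^ 2 * ((b - 2 * e0 * s0 / A) ^ 2) < A ^ 2 * D := by
          have h3 : A ^ 2 * ((b - 2 * e0 * s0 / A) ^ 2)
              = (A * b - 2 * e0 * s0) ^ 2 := by field_simp
          rw [h3, hD, hb]
          nlinarith [mul_pos (mul_pos (mul_pos he0 hs0) hs0) hKM]
        exact lt_of_mul_lt_mul_left key (by positivity)
    rw [hlam, lt_div_iff₀ hApos]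
    have h2' : (b - 2 * e0 * s0 / A) * A < Real.sqrt D * A :=
      mul_lt_mul_of_pos_right h2 hApos
    have hexp : (b - 2 * e0 * s0 / A) * A = b * A - 2 * (e0 * s0) := by
      field_simp
    have hexp2 : (b / 2 - Real.sqrt D / 2) * A = b * A / 2 - Real.sqrt D * A / 2 := by ring
    linarith [hexp ▸ h2']
  refine ⟨hlow, hup, ?_⟩
  have hηval : η / (1 + η) = e0 / A := by
    rw [hη, hA]
    rw [div_eq_div_iff (by positivity) (by positivity)]
    field_simp
    ring
  rw [hηval, div_le_div_iff₀ hs0 hApos]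
  rw [lt_div_iff₀ hApos] at hup
  nlinarith [hup]
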